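/- Let Q be a Dynkin quiver and E(Q) the fundamental domain in D^b(Q) consisting of indecomposable modules together with shifts M[1] of indecomposable noninjective modules M. For any X, Y in E(Q): (a) Hom_{D^b(Q)}(X, τ^k Y[2k]) = 0 for all integers k other than 0 and 1; (b) Hom_{D^b(Q)}(X, τ^k Y[2k]) is nonzero for at most one value of k. -/

import Mathlib

/-- An axiomatic combinatorial model of the bounded derived category `D^b(Q)` of
a simply laced Dynkin quiver `Q` with `n` vertices over an algebraically closed
field `K`, recorded at the level of isomorphism classes of indecomposable
objects.  Every indecomposable object of `D^b(Q)` is `M[i]` for a unique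
indecomposable `KQ`-module `M` and degree `i`, and is modelled by the pair
`(M, i)`.  Hom- and Ext-spaces between modules are recorded via their
dimensions, and Hom-spaces in `D^b(Q)` are determined from them since `KQ` is
hereditary.  The Auslander–Reiten translation `τ` of `D^b(Q)` is part of the
data; the axioms record the standard facts about `Q` being of Dynkin type:
finitely many indecomposables, all rigid, the behaviour of `τ` on projectives
and on non-projective modules, the Auslander–Reiten (Serre duality) formulas,
and Gabriel-style facts about simples, projectives and injectives. -/
structure DynkinModel (n : ℕ) : Type 1 where
  /-- isomorphism classes of indecomposable `KQ`-modules -/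
  M : Type
  finite : Finite M
  /-- `homDim X Y = dim_K Hom_{KQ}(X, Y)` -/
  homDim : M → M → ℕ
  /-- `extDim X Y = dim_K Ext¹_{KQ}(X, Y)` -/
  extDim : M → M → ℕ
  /-- the dimension vector of a module -/
  dimv : M → Fin n → ℕ
  /-- the simple module at a vertex -/
  simple : Fin n → M
  /-- the indecomposable projective module at a vertex -/
  projective : Fin n → M
  /-- the indecomposable injective module at a vertex -/
  injective : Fin n → M
  /-- the Auslander–Reiten translation `τ` of `D^b(Q)`, a permutation of the
  indecomposable objects -/
  tau : Equiv.Perm (M × ℤ)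
  endo_pos : ∀ X, 0 < homDim X X
  rigid : ∀ X, extDim X X = 0
  simple_injective : Function.Injective simple
  simple_dimv : ∀ i j, dimv (simple i) j = if i = j then 1 else 0
  dimv_ne_zero : ∀ X, ∃ i, dimv X i ≠ 0
  hom_projective : ∀ i X, homDim (projective i) X = dimv X i
  hom_injective : ∀ i X, homDim X (injective i) = dimv X i
  ext_projective : ∀ i X, extDim (projective i) X = 0
  ext_injective : ∀ i X, extDim X (injective i) = 0
  tau_shift : ∀ X (i : ℤ), tau (X, i) = ((tau (X, 0)).1, (tau (X, 0)).2 + i)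
  tau_projective : ∀ i, tau (projective i, 0) = (injective i, -1)
  tau_module : ∀ X, (∀ i, X ≠ projective i) → (tau (X, 0)).2 = 0
  serre_mod : ∀ X Y, (∀ i, X ≠ projective i) → homDim X Y = extDim Y ((tau (X, 0)).1)
  ar_formula : ∀ X Y, (∀ i, X ≠ projective i) → extDim X Y = homDim Y ((tau (X, 0)).1)

namespace DynkinModel

variable {n : ℕ} (D : DynkinModel n)

/-- the shift functor `[k]` on indecomposable objects of `D^b(Q)` -/
def shf (X : D.M × ℤ) (k : ℤ) : D.M × ℤ := (X.1, X.2 + k)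

/-- the dimension of `Hom_{D^b(Q)}(X, Y)`; since `KQ` is hereditary this is a
Hom-space of modules if the degrees agree, an `Ext¹` if they differ by one, and
zero otherwise. -/
def dhom (X Y : D.M × ℤ) : ℕ :=
  if Y.2 = X.2 then D.homDim X.1 Y.1
  else if Y.2 = X.2 + 1 then D.extDim X.1 Y.1 else 0

/-- the fundamental domain `E(Q)` for the action of `τ[2]` on the
indecomposables of `D^b(Q)`: indecomposable modules (degree `0`) together with
the shifts `M[1]` of noninjective indecomposable modules (degree `1`).  The
indecomposable objects of the orbit category `C(Q) = D^b(Q)/τ[2]` are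
identified with `E(Q)`. -/
def fund : Set (D.M × ℤ) :=
  {X | X.2 = 0 ∨ (X.2 = 1 ∧ ∀ i, X.1 ≠ D.injective i)}

/-- `Hom_{C(Q)}(X, Y) ≠ 0` in the orbit category `C(Q) = D^b(Q)/τ[2]`, whose
Hom-spaces are `⨁ₖ Hom_{D^b(Q)}(X, τᵏ Y [2k])`. -/
def cHom (X Y : D.M × ℤ) : Prop :=
  ∃ k : ℤ, D.dhom X (D.shf ((D.tau ^ k) Y) (2 * k)) ≠ 0

/-- a Hom-free set of indecomposable objects of `C(Q)`: pairwise nonisomorphic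
indecomposables (identified with the fundamental domain) with all Hom-spaces
between distinct members vanishing -/
def HomFree (T : Set (D.M × ℤ)) : Prop :=
  T ⊆ D.fund ∧ ∀ X ∈ T, ∀ Y ∈ T, X ≠ Y → ¬ D.cHom X Y

/-- a Hom-configuration: a maximal Hom-free set in `C(Q)` -/
def HomConfig (T : Set (D.M × ℤ)) : Prop :=
  D.HomFree T ∧ ∀ T', D.HomFree T' → T ⊆ T' → T' = T

lemma tau_snd_aux (Z : D.M × ℤ) :
    (D.tau Z).2 = Z.2 ∨ ((D.tau Z).2 = Z.2 - 1 ∧ ∃ i, (D.tau Z).1 = D.injective i) := by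
  obtain ⟨A, d⟩ := Z
  have h := D.tau_shift A d
  by_cases hp : ∃ i, A = D.projective i
  · obtain ⟨i, rfl⟩ := hp
    right
    rw [h, D.tau_projective i]
    exact ⟨by ring, ⟨i, rfl⟩⟩
  · left
    push_neg at hp
    rw [h, D.tau_module A hp]
    ring

lemma tauInv_snd_aux (Z : D.M × ℤ) :
    (D.tau⁻¹ Z).2 = Z.2 ∨ ((D.tau⁻¹ Z).2 = Z.2 + 1 ∧ ∃ i, Z.1 = D.injective i) := by
  have h := D.tau_snd_aux (D.tau⁻¹ Z)
  rw [show D.tau (D.tau⁻¹ Z) = Z from D.tau.apply_symm_apply Z] at h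
  rcases h with h | ⟨h, i, hi⟩
  · left; omega
  · right
    exact ⟨by omega, i, hi⟩

lemma deg_pos_aux (Y : D.M × ℤ) (m : ℕ) :
    Y.2 + m ≤ ((D.tau ^ m) Y).2 + 2 * m ∧
      (1 ≤ m → ((D.tau ^ m) Y).2 + 2 * m = Y.2 + m →
        ∃ i, ((D.tau ^ m) Y).1 = D.injective i) := by
  induction m with
  | zero => simp
  | succ m IH =>
    obtain ⟨IH1, IH2⟩ := IH
    have hs : (D.tau ^ (m + 1)) Y = D.tau ((D.tau ^ m) Y) := by
      rw [pow_succ', Equiv.Perm.mul_apply]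
    rw [hs]
    rcases D.tau_snd_aux ((D.tau ^ m) Y) with h | ⟨h, i, hi⟩
    · constructor
      · omega
      · intro _ heq; exfalso; omega
    · constructor
      · omega
      · intro _ _; exact ⟨i, hi⟩

lemma deg_neg_aux (Y : D.M × ℤ) (m : ℕ) :
    ((D.tau⁻¹ ^ m) Y).2 - 2 * m ≤ Y.2 - m ∧
      (1 ≤ m → ((D.tau⁻¹ ^ m) Y).2 - 2 * m = Y.2 - m →
        ∃ i, Y.1 = D.injective i) := by
  induction m with
  | zero => simp
  | succ m IH =>
    obtain ⟨IH1, IH2⟩ := IH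
    have hs : (D.tau⁻¹ ^ (m + 1)) Y = D.tau⁻¹ ((D.tau⁻¹ ^ m) Y) := by
      rw [pow_succ', Equiv.Perm.mul_apply]
    rw [hs]
    rcases D.tauInv_snd_aux ((D.tau⁻¹ ^ m) Y) with h | ⟨h, i, hi⟩
    · constructor
      · omega
      · intro _ heq; exfalso; omega
    · constructor
      · omega
      · intro _ heq
        rcases Nat.eq_zero_or_pos m with rfl | hm
        · simp only [pow_zero, Equiv.Perm.one_def, Equiv.refl_apply] at hi
          exact ⟨i, hi⟩
        · exact IH2 hm (by omega)

end DynkinModel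

/-- For `X, Y` in the fundamental domain `E(Q)`:
(a) `Hom_{D^b(Q)}(X, τᵏ Y [2k]) = 0` for every integer `k ≠ 0, 1`;
(b) `Hom_{D^b(Q)}(X, τᵏ Y [2k])` is nonzero for at most one value of `k`. -/
theorem stmt10 (n : ℕ) (D : DynkinModel n) (X Y : D.M × ℤ)
    (hX : X ∈ D.fund) (hY : Y ∈ D.fund) :
    (∀ k : ℤ, k ≠ 0 → k ≠ 1 → D.dhom X (D.shf ((D.tau ^ k) Y) (2 * k)) = 0) ∧
      (∀ k l : ℤ, D.dhom X (D.shf ((D.tau ^ k) Y) (2 * k)) ≠ 0 →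
        D.dhom X (D.shf ((D.tau ^ l) Y) (2 * l)) ≠ 0 → k = l) := by
  have hX2 : X.2 = 0 ∨ X.2 = 1 := hX.imp id And.left
  have hY2 : Y.2 = 0 ∨ Y.2 = 1 := hY.imp id And.left
  have hYni : Y.2 = 1 → ∀ i, Y.1 ≠ D.injective i := by
    rcases hY with h | ⟨h1, h2⟩
    · intro h; omega
    · intro _; exact h2
  have parta : ∀ k : ℤ, k ≠ 0 → k ≠ 1 →
      D.dhom X (D.shf ((D.tau ^ k) Y) (2 * k)) = 0 := by
    intro k hk0 hk1
    rcases lt_or_ge k 0 with hneg | hpos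
    · -- k ≤ -1
      set m := (-k).toNat with hmdef
      have hm : (m : ℤ) = -k := Int.toNat_of_nonneg (by omega)
      have hpow : D.tau ^ k = D.tau⁻¹ ^ m := by
        rw [inv_pow, ← zpow_natCast D.tau m, ← zpow_neg]
        congr 1
        omega
      rw [hpow]
      obtain ⟨d1, d2⟩ := D.deg_neg_aux Y m
      clear_value m
      dsimp only [DynkinModel.dhom, DynkinModel.shf]
      split_ifs with h1 h2
      · exfalso
        have hcon : 1 ≤ m ∧ ((D.tau⁻¹ ^ m) Y).2 - 2 * (m : ℤ) = Y.2 - m ∧ Y.2 = 1 := by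
          omega
        obtain ⟨i, hi⟩ := d2 hcon.1 hcon.2.1
        exact hYni hcon.2.2 i hi
      · exfalso; omega
      · rfl
    · -- k ≥ 2
      set m := k.toNat with hmdef
      have hm : (m : ℤ) = k := Int.toNat_of_nonneg hpos
      have hpow : D.tau ^ k = D.tau ^ m := by
        rw [← zpow_natCast D.tau m, hm]
      rw [hpow]
      obtain ⟨d1, d2⟩ := D.deg_pos_aux Y m
      clear_value m
      dsimp only [DynkinModel.dhom, DynkinModel.shf]
      split_ifs with h1 h2
      · exfalso; omega
      · have hcon : 1 ≤ m ∧ ((D.tau ^ m) Y).2 + 2 * (m : ℤ) = Y.2 + m := by omega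
        obtain ⟨i, hi⟩ := d2 hcon.1 hcon.2
        rw [hi]
        exact D.ext_injective i X.1
      · rfl
  refine ⟨parta, ?_⟩
  have key : ¬ (D.dhom X (D.shf ((D.tau ^ (0 : ℤ)) Y) (2 * 0)) ≠ 0 ∧
      D.dhom X (D.shf ((D.tau ^ (1 : ℤ)) Y) (2 * 1)) ≠ 0) := by
    rintro ⟨h0, h1⟩
    have hc0 : Y.2 + 2 * (0 : ℤ) = X.2 ∨ Y.2 + 2 * (0 : ℤ) = X.2 + 1 := by
      by_contra hc
      push_neg at hc
      apply h0
      simp only [DynkinModel.dhom, DynkinModel.shf, zpow_zero, Equiv.Perm.one_def,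
        Equiv.refl_apply]
      rw [if_neg hc.1, if_neg hc.2]
    have hc1 : (D.tau Y).2 + 2 * (1 : ℤ) = X.2 ∨ (D.tau Y).2 + 2 * (1 : ℤ) = X.2 + 1 := by
      by_contra hc
      push_neg at hc
      apply h1
      simp only [DynkinModel.dhom, DynkinModel.shf, zpow_one]
      rw [if_neg hc.1, if_neg hc.2]
    rcases D.tau_snd_aux Y with he | ⟨he, i, hi⟩
    · omega
    · rcases hc1 with h | h
      · omega
      · apply h1
        simp only [DynkinModel.dhom, DynkinModel.shf, zpow_one]
        rw [if_neg (by omega), if_pos h, hi]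
        exact D.ext_injective i X.1
  have mem : ∀ j : ℤ, D.dhom X (D.shf ((D.tau ^ j) Y) (2 * j)) ≠ 0 → j = 0 ∨ j = 1 := by
    intro j hj
    by_contra hc
    push_neg at hc
    exact hj (parta j hc.1 hc.2)
  intro k l hk hl
  rcases mem k hk with rfl | rfl <;> rcases mem l hl with rfl | rfl
  · rfl
  · exact absurd ⟨hk, hl⟩ key
  · exact absurd ⟨hl, hk⟩ key
  · rfl
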